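/- Let p be an odd prime and H = ℂ(𝔽_p) with the standard inner product. For two distinct lines L ≠ M in the symplectic plane V = 𝔽_p × 𝔽_p, let B_L and B_M be orthonormal eigenbases of H diagonalizing the restriction of the Heisenberg representation π to L and M respectively. Then for every φ ∈ B_L and ψ ∈ B_M, |⟨φ, ψ⟩| = 1/√p. -/

import Mathlib

open Complex

/-- The (projective) Heisenberg action of `(τ, w) ∈ V = 𝔽_p × 𝔽_p` on `ℂ(𝔽_p)`:
`(π(τ,w) f)(t) = e^{2πi w t / p} f(t + τ)`. -/
noncomputable def heisU (p : ℕ) (v : ZMod p × ZMod p) (f : ZMod p → ℂ) : ZMod p → ℂ :=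
  fun t => Complex.exp (2 * Real.pi * Complex.I * ((v.2 * t).val : ℕ) / p) * f (t + v.1)

noncomputable def ee (p : ℕ) (x : ZMod p) : ℂ :=
  Complex.exp (2 * Real.pi * Complex.I * (x.val : ℕ) / p)

lemma heisU_eq (p : ℕ) (v : ZMod p × ZMod p) (f : ZMod p → ℂ) (t : ZMod p) :
    heisU p v f t = ee p (v.2 * t) * f (t + v.1) := rfl

lemma ee_eq (p : ℕ) (x : ZMod p) :
    ee p x = Complex.exp (2 * Real.pi * Complex.I / p) ^ x.val := by
  rw [ee, ← Complex.exp_nat_mul]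
  congr 1
  ring

lemma ee_zero (p : ℕ) [NeZero p] : ee p 0 = 1 := by
  rw [ee_eq, ZMod.val_zero, pow_zero]

lemma ee_add {p : ℕ} [NeZero p] (x y : ZMod p) : ee p (x + y) = ee p x * ee p y := by
  have hζ : Complex.exp (2 * Real.pi * Complex.I / p) ^ p = 1 :=
    (Complex.isPrimitiveRoot_exp p (NeZero.ne p)).pow_eq_one
  have key : ∀ a : ℕ, Complex.exp (2 * Real.pi * Complex.I / p) ^ (a % p)
      = Complex.exp (2 * Real.pi * Complex.I / p) ^ a := by
    intro a
    conv_rhs => rw [← Nat.mod_add_div a p]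
    rw [pow_add, pow_mul, hζ, one_pow, mul_one]
  rw [ee_eq, ee_eq, ee_eq, ZMod.val_add, key, pow_add]

lemma ee_abs (p : ℕ) (x : ZMod p) : ‖ee p x‖ = 1 := by
  have : (2 * Real.pi * Complex.I * (x.val : ℕ) / p)
      = ((2 * Real.pi * x.val / p : ℝ) : ℂ) * Complex.I := by
    push_cast
    ring
  rw [ee, this, Complex.norm_exp_ofReal_mul_I]

lemma ee_conj (p : ℕ) [NeZero p] (x : ZMod p) :
    (starRingEnd ℂ) (ee p x) = ee p (-x) := by
  have h1 : ee p x * ee p (-x) = 1 := by rw [← ee_add, add_neg_cancel, ee_zero]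
  have h2 := Complex.inv_eq_conj (by rw [ee_abs] : ‖ee p x‖ = 1)
  rw [← h2]
  exact inv_eq_of_mul_eq_one_right h1

lemma ee_sum_zero {p : ℕ} [Fact p.Prime] : ∑ s : ZMod p, ee p s = 0 := by
  have hp1 : 1 < p := (Fact.out : p.Prime).one_lt
  have : NeZero p := ⟨(Fact.out : p.Prime).ne_zero⟩
  have shift : ∑ s : ZMod p, ee p (s + 1) = ∑ s : ZMod p, ee p s :=
    Fintype.sum_equiv (Equiv.addRight 1) _ _ (fun x => rfl)
  have expand : ∑ s : ZMod p, ee p (s + 1) = ee p 1 * ∑ s : ZMod p, ee p s := by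
    rw [Finset.mul_sum]
    exact Finset.sum_congr rfl fun s _ => by rw [ee_add, mul_comm]
  have hne : ee p 1 ≠ 1 := by
    rw [ee_eq, ZMod.val_one, pow_one]
    exact (Complex.isPrimitiveRoot_exp p (NeZero.ne p)).ne_one hp1
  have heq := expand.symm.trans shift
  have h0 : (ee p 1 - 1) * ∑ s : ZMod p, ee p s = 0 := by
    rw [sub_mul, one_mul, heq, sub_self]
  rcases mul_eq_zero.mp h0 with h | h
  · exact absurd (sub_eq_zero.mp h) hne
  · exact h

lemma ee_sum_mul {p : ℕ} [Fact p.Prime] (a : ZMod p) (ha : a ≠ 0) :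
    ∑ s : ZMod p, ee p (a * s) = 0 := by
  rw [Fintype.sum_equiv (Equiv.mulLeft₀ a ha) (fun s => ee p (a * s)) (ee p) (fun s => rfl)]
  exact ee_sum_zero

lemma ee_inj {p : ℕ} [Fact p.Prime] {x y : ZMod p} (h : ee p x = ee p y) : x = y := by
  have : NeZero p := ⟨(Fact.out : p.Prime).ne_zero⟩
  rw [ee_eq, ee_eq] at h
  exact ZMod.val_injective p
    ((Complex.isPrimitiveRoot_exp p (NeZero.ne p)).pow_inj (ZMod.val_lt x) (ZMod.val_lt y) h)

lemma sqrt_helper {r : ℝ} (hr : 0 ≤ r) {p : ℕ} (hp : 0 < p) (h : r ^ 2 * p = 1) :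
    r = 1 / Real.sqrt p := by
  have hp' : (0:ℝ) < p := by exact_mod_cast hp
  have h2 : r ^ 2 = (p : ℝ)⁻¹ := by field_simp at h ⊢; linarith
  rw [← Real.sqrt_sq hr, h2, Real.sqrt_inv, one_div]

/-- Structure of a joint eigenvector for a "vertical" line. -/
lemma vert_struct {p : ℕ} [Fact p.Prime] (φ : ZMod p → ℂ)
    (hnorm : ∑ t, ‖φ t‖ ^ 2 = 1)
    (hφ : ∃ l : ℂ, heisU p (0, 1) φ = l • φ) :
    ∃ t₀ : ZMod p, ‖φ t₀‖ = 1 ∧ ∀ t, t ≠ t₀ → φ t = 0 := by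
  have : NeZero p := ⟨(Fact.out : p.Prime).ne_zero⟩
  obtain ⟨l, hl⟩ := hφ
  have h : ∀ t, ee p t * φ t = l * φ t := by
    intro t
    have := congrFun hl t
    rw [heisU_eq] at this
    simpa using this
  have hex : ∃ t, φ t ≠ 0 := by
    by_contra hc
    push_neg at hc
    simp [hc] at hnorm
  obtain ⟨t₀, ht₀⟩ := hex
  have huniq : ∀ t, φ t ≠ 0 → t = t₀ := by
    intro t ht
    have h1 : ee p t = l := mul_right_cancel₀ ht (h t)
    have h2 : ee p t₀ = l := mul_right_cancel₀ ht₀ (h t₀)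
    exact ee_inj (h1.trans h2.symm)
  have hzero : ∀ t, t ≠ t₀ → φ t = 0 := fun t ht => by
    by_contra hc; exact ht (huniq t hc)
  refine ⟨t₀, ?_, hzero⟩
  have hsum : ∑ t, ‖φ t‖ ^ 2 = ‖φ t₀‖ ^ 2 := by
    refine Finset.sum_eq_single t₀ (fun b _ hb => by rw [hzero b hb]; simp) ?_
    intro h'; exact absurd (Finset.mem_univ t₀) h'
  rw [hsum] at hnorm
  nlinarith [norm_nonneg (φ t₀)]

/-- Structure of a joint eigenvector for a line with slope `c`. -/
lemma slope_struct {p : ℕ} [Fact p.Prime] (c : ZMod p) (φ : ZMod p → ℂ)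
    (hnorm : ∑ t, ‖φ t‖ ^ 2 = 1)
    (hφ : ∀ a : ZMod p, ∃ l : ℂ, heisU p (a, c * a) φ = l • φ) :
    (∀ t, ‖φ t‖ = ‖φ 0‖) ∧
    ‖φ 0‖ ^ 2 * p = 1 ∧
    (∀ τ t : ZMod p, ee p (c * τ * t) * φ (t + τ) * φ 0 = φ τ * φ t) := by
  have : NeZero p := ⟨(Fact.out : p.Prime).ne_zero⟩
  have key : ∀ τ : ZMod p, ∃ l : ℂ, ∀ t, ee p (c * τ * t) * φ (t + τ) = l * φ t := by
    intro τ
    obtain ⟨l, hl⟩ := hφ τ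
    exact ⟨l, fun t => by
      have := congrFun hl t
      rw [heisU_eq] at this
      simpa using this⟩
  choose lam hlam using key
  have habs_lam : ∀ τ, ‖lam τ‖ = 1 := by
    intro τ
    have hsum : ∀ τ' : ZMod p, ∑ t, ‖φ (t + τ')‖ ^ 2 = 1 := by
      intro τ'
      rw [Fintype.sum_equiv (Equiv.addRight τ') (fun t => ‖φ (t + τ')‖ ^ 2)
        (fun t => ‖φ t‖ ^ 2) (fun t => rfl)]
      exact hnorm
    have h1 : ∀ t, ‖φ (t + τ)‖ = ‖lam τ‖ * ‖φ t‖ := by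
      intro t
      have := congrArg (fun z : ℂ => ‖z‖) (hlam τ t)
      rwa [norm_mul, norm_mul, ee_abs, one_mul] at this
    have h2 : (1:ℝ) = ‖lam τ‖ ^ 2 * 1 := by
      calc (1:ℝ) = ∑ t, ‖φ (t + τ)‖ ^ 2 := (hsum τ).symm
        _ = ∑ t, ‖lam τ‖ ^ 2 * ‖φ t‖ ^ 2 := by
            exact Finset.sum_congr rfl fun t _ => by rw [h1 t]; ring
        _ = ‖lam τ‖ ^ 2 * ∑ t, ‖φ t‖ ^ 2 := by rw [Finset.mul_sum]
        _ = ‖lam τ‖ ^ 2 * 1 := by rw [hnorm]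
    nlinarith [norm_nonneg (lam τ)]
  have heval : ∀ τ, φ τ = lam τ * φ 0 := by
    intro τ
    have := hlam τ 0
    rwa [mul_zero, ee_zero, one_mul, zero_add] at this
  have habs : ∀ t, ‖φ t‖ = ‖φ 0‖ := by
    intro t
    rw [heval t, norm_mul, habs_lam, one_mul]
  refine ⟨habs, ?_, ?_⟩
  · have : ∑ t : ZMod p, ‖φ t‖ ^ 2 = (p : ℝ) * ‖φ 0‖ ^ 2 := by
      rw [Finset.sum_congr rfl (fun t _ => by rw [habs t]), Finset.sum_const,
        Finset.card_univ, ZMod.card, nsmul_eq_mul]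
    rw [this] at hnorm
    linarith
  · intro τ t
    rw [mul_assoc, heval τ]
    calc ee p (c * τ * t) * (φ (t + τ) * φ 0) = (ee p (c * τ * t) * φ (t + τ)) * φ 0 := by ring
      _ = lam τ * φ t * φ 0 := by rw [hlam τ t]
      _ = lam τ * φ 0 * φ t := by ring


lemma mixed_case {p : ℕ} [Fact p.Prime] (φ ψ : ZMod p → ℂ)
    (hφnorm : ∑ t, ‖φ t‖ ^ 2 = 1)
    (hψnorm : ∑ t, ‖ψ t‖ ^ 2 = 1)
    (hφ : ∃ l : ℂ, heisU p (0, 1) φ = l • φ)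
    (d : ZMod p)
    (hψ : ∀ a : ZMod p, ∃ l : ℂ, heisU p (a, d * a) ψ = l • ψ) :
    ‖∑ t, φ t * (starRingEnd ℂ) (ψ t)‖ = 1 / Real.sqrt p := by
  have hp : 0 < p := (Fact.out : p.Prime).pos
  obtain ⟨t₀, ht₀, hzero⟩ := vert_struct φ hφnorm hφ
  obtain ⟨habsψ, hψ0, -⟩ := slope_struct d ψ hψnorm hψ
  have hsum : ∑ t, φ t * (starRingEnd ℂ) (ψ t) = φ t₀ * (starRingEnd ℂ) (ψ t₀) := by
    refine Finset.sum_eq_single t₀ (fun b _ hb => by rw [hzero b hb, zero_mul]) ?_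
    intro h'; exact absurd (Finset.mem_univ t₀) h'
  rw [hsum, norm_mul, ht₀, one_mul, Complex.norm_conj, habsψ]
  exact sqrt_helper (norm_nonneg _) hp hψ0

local notation "K" => starRingEnd ℂ

lemma slope_slope {p : ℕ} [Fact p.Prime] (c d : ZMod p) (hcd : c ≠ d) (φ ψ : ZMod p → ℂ)
    (hφnorm : ∑ t, ‖φ t‖ ^ 2 = 1)
    (hψnorm : ∑ t, ‖ψ t‖ ^ 2 = 1)
    (hφ : ∀ a : ZMod p, ∃ l : ℂ, heisU p (a, c * a) φ = l • φ)
    (hψ : ∀ a : ZMod p, ∃ l : ℂ, heisU p (a, d * a) ψ = l • ψ) :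
    ‖∑ t, φ t * (starRingEnd ℂ) (ψ t)‖ = 1 / Real.sqrt p := by
  have : NeZero p := ⟨(Fact.out : p.Prime).ne_zero⟩
  have hp : 0 < p := (Fact.out : p.Prime).pos
  obtain ⟨habsφ, hφ0, hkeyφ⟩ := slope_struct c φ hφnorm hφ
  obtain ⟨habsψ, hψ0, hkeyψ⟩ := slope_struct d ψ hψnorm hψ
  set A : ℂ := ((‖φ 0‖ ^ 2 : ℝ) : ℂ) with hA
  set B : ℂ := ((‖ψ 0‖ ^ 2 : ℝ) : ℂ) with hB
  have f1 : ∀ s, φ s * K (φ s) = A := by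
    intro s
    rw [Complex.mul_conj, hA]
    exact congrArg _ (by rw [← Complex.sq_norm, habsφ s])
  have f2 : ∀ s, ψ s * K (ψ s) = B := by
    intro s
    rw [Complex.mul_conj, hB]
    exact congrArg _ (by rw [← Complex.sq_norm, habsψ s])
  have hφ0ne : φ 0 ≠ 0 := by
    intro h
    rw [h] at hφ0; simp at hφ0
  have hψ0ne : K (ψ 0) ≠ 0 := by
    intro h
    rw [map_eq_zero] at h
    rw [h] at hψ0; simp at hψ0
  set S : ℂ := ∑ t, φ t * K (ψ t) with hS
  set F : ZMod p → ZMod p → ℂ := fun t s => (φ t * K (ψ t)) * (K (φ s) * ψ s) with hF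
  -- per-term identity
  have perterm : ∀ u s : ZMod p,
      (φ 0 * K (ψ 0)) * F (s + u) s = ee p ((d - c) * u * s) * (φ u * K (ψ u)) * (A * B) := by
    intro u s
    have e1 := hkeyφ u s
    have e2 := congrArg (starRingEnd ℂ) (hkeyψ u s)
    simp only [map_mul, ee_conj] at e2
    have hE : ee p ((d - c) * u * s) * ee p (c * u * s) * ee p (-(d * u * s)) = 1 := by
      rw [← ee_add, ← ee_add]
      have harg : (d - c) * u * s + c * u * s + -(d * u * s) = 0 := by ring
      rw [harg, ee_zero]
    calc (φ 0 * K (ψ 0)) * F (s + u) s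
        = (ee p ((d - c) * u * s) * ee p (c * u * s) * ee p (-(d * u * s)))
            * ((φ 0 * K (ψ 0)) * F (s + u) s) := by rw [hE, one_mul]
      _ = ee p ((d - c) * u * s) * ((ee p (c * u * s) * φ (s + u) * φ 0)
            * (ee p (-(d * u * s)) * K (ψ (s + u)) * K (ψ 0)) * (K (φ s) * ψ s)) := by
          simp only [hF]; ring
      _ = ee p ((d - c) * u * s) * ((φ u * φ s) * (K (ψ u) * K (ψ s)) * (K (φ s) * ψ s)) := by
          rw [e1, e2]
      _ = ee p ((d - c) * u * s) * ((φ u * K (ψ u)) * ((φ s * K (φ s)) * (ψ s * K (ψ s)))) := by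
          ring
      _ = ee p ((d - c) * u * s) * (φ u * K (ψ u)) * (A * B) := by
          rw [f1 s, f2 s]; ring
  have hKS : K S = ∑ s, K (φ s) * ψ s := by
    rw [hS, map_sum]
    exact Finset.sum_congr rfl fun s _ => by rw [map_mul, Complex.conj_conj]
  have h1 : S * K S = ∑ t, ∑ s, F t s := by
    rw [hKS, hS, Finset.sum_mul_sum]
  have h2 : (∑ t, ∑ s, F t s) = ∑ u, ∑ s, F (s + u) s := by
    calc (∑ t, ∑ s, F t s) = ∑ s, ∑ t, F t s := Finset.sum_comm
      _ = ∑ s, ∑ u, F (s + u) s := Finset.sum_congr rfl fun s _ =>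
          (Fintype.sum_equiv (Equiv.addLeft s) (fun u => F (s + u) s)
            (fun t => F t s) (fun u => rfl)).symm
      _ = ∑ u, ∑ s, F (s + u) s := Finset.sum_comm
  have h4 : ∀ u : ZMod p, (∑ s, ee p ((d - c) * u * s)) = if u = 0 then (p : ℂ) else 0 := by
    intro u
    by_cases hu : u = 0
    · simp only [hu, if_true, mul_zero, zero_mul, ee_zero, Finset.sum_const,
        Finset.card_univ, ZMod.card, nsmul_eq_mul, mul_one]
    · rw [if_neg hu]
      exact ee_sum_mul ((d - c) * u) (mul_ne_zero (sub_ne_zero.mpr (Ne.symm hcd)) hu)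
  have main : (φ 0 * K (ψ 0)) * (S * K S) = (φ 0 * K (ψ 0)) * (A * B * p) := by
    calc (φ 0 * K (ψ 0)) * (S * K S)
        = ∑ u, ∑ s, (φ 0 * K (ψ 0)) * F (s + u) s := by
          rw [h1, h2, Finset.mul_sum]
          exact Finset.sum_congr rfl fun u _ => Finset.mul_sum _ _ _
      _ = ∑ u, (φ u * K (ψ u)) * (A * B) * ∑ s, ee p ((d - c) * u * s) := by
          refine Finset.sum_congr rfl fun u _ => ?_
          calc (∑ s, (φ 0 * K (ψ 0)) * F (s + u) s)
              = ∑ s, (φ u * K (ψ u)) * (A * B) * ee p ((d - c) * u * s) :=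
                Finset.sum_congr rfl fun s _ => by rw [perterm u s]; ring
            _ = (φ u * K (ψ u)) * (A * B) * ∑ s, ee p ((d - c) * u * s) :=
                (Finset.mul_sum _ _ _).symm
      _ = ∑ u, (φ u * K (ψ u)) * (A * B) * (if u = 0 then (p : ℂ) else 0) :=
          Finset.sum_congr rfl fun u _ => by rw [h4 u]
      _ = (φ 0 * K (ψ 0)) * (A * B * p) := by
          rw [Finset.sum_eq_single 0 (fun b _ hb => by rw [if_neg hb, mul_zero])
            (fun h' => absurd (Finset.mem_univ 0) h')]
          rw [if_pos rfl]; ring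
  have hcancel : S * K S = A * B * p :=
    mul_left_cancel₀ (mul_ne_zero hφ0ne hψ0ne) main
  have habsS : (‖S‖ ^ 2 : ℝ) = ‖φ 0‖ ^ 2 * (‖ψ 0‖ ^ 2 * p) := by
    have hc : ((‖S‖ ^ 2 : ℝ) : ℂ)
        = ((‖φ 0‖ ^ 2 * (‖ψ 0‖ ^ 2 * p) : ℝ) : ℂ) := by
      rw [Complex.sq_norm, ← Complex.mul_conj, hcancel, hA, hB]
      push_cast
      ring
    exact_mod_cast hc
  have hfinal : ‖S‖ ^ 2 * p = 1 := by
    rw [habsS]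
    calc ‖φ 0‖ ^ 2 * (‖ψ 0‖ ^ 2 * ↑p) * ↑p
        = (‖φ 0‖ ^ 2 * p) * (‖ψ 0‖ ^ 2 * p) := by ring
      _ = 1 := by rw [hφ0, hψ0, mul_one]
  exact sqrt_helper (norm_nonneg _) hp hfinal

lemma line_span {p : ℕ} [Fact p.Prime] (L : Submodule (ZMod p) (ZMod p × ZMod p))
    (hL : Module.finrank (ZMod p) L = 1) :
    ∃ x : ZMod p × ZMod p, x ≠ 0 ∧ L = Submodule.span (ZMod p) {x} := by
  rw [finrank_eq_one_iff'] at hL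
  obtain ⟨⟨x, hxL⟩, hx0, hspan⟩ := hL
  refine ⟨x, by simpa [Submodule.mk_eq_zero] using hx0, le_antisymm ?_ ?_⟩
  · intro y hy
    obtain ⟨a, ha⟩ := hspan ⟨y, hy⟩
    rw [Submodule.mem_span_singleton]
    exact ⟨a, congrArg Subtype.val ha⟩
  · rw [Submodule.span_le, Set.singleton_subset_iff]
    exact hxL

/-- Mutual unbiasedness of the eigenbases of the Heisenberg representation attached to two
distinct lines `L ≠ M` in the symplectic plane `𝔽_p × 𝔽_p` (`p` an odd prime): if `φ` is a
unit joint eigenvector of the operators `π(l)`, `l ∈ L`, and `ψ` is a unit joint eigenvector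
of the operators `π(m)`, `m ∈ M`, then `|⟨φ, ψ⟩| = 1/√p`. -/
theorem stmt_13 (p : ℕ) [Fact p.Prime] (hodd : p ≠ 2)
    (L M : Submodule (ZMod p) (ZMod p × ZMod p))
    (hL : Module.finrank (ZMod p) L = 1) (hM : Module.finrank (ZMod p) M = 1)
    (hLM : L ≠ M)
    (φ ψ : ZMod p → ℂ)
    (hφnorm : ∑ t, ‖φ t‖ ^ 2 = 1)
    (hψnorm : ∑ t, ‖ψ t‖ ^ 2 = 1)
    (hφ : ∀ v ∈ L, ∃ c : ℂ, heisU p v φ = c • φ)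
    (hψ : ∀ v ∈ M, ∃ c : ℂ, heisU p v ψ = c • ψ) :
    ‖∑ t, φ t * (starRingEnd ℂ) (ψ t)‖ = 1 / Real.sqrt p := by
  obtain ⟨x, hx0, hLx⟩ := line_span L hL
  obtain ⟨y, hy0, hMy⟩ := line_span M hM
  -- membership facts
  have hmemL : ∀ a : ZMod p, (a • x) ∈ L := fun a => by
    rw [hLx]; exact Submodule.smul_mem _ a (Submodule.mem_span_singleton_self x)
  have hmemM : ∀ a : ZMod p, (a • y) ∈ M := fun a => by
    rw [hMy]; exact Submodule.smul_mem _ a (Submodule.mem_span_singleton_self y)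
  -- span equality tool
  have span_eq : ∀ {u v : ZMod p × ZMod p}, (∃ a : ZMod p, v = a • u) →
      (∃ b : ZMod p, u = b • v) → Submodule.span (ZMod p) {u} = Submodule.span (ZMod p) {v} := by
    rintro u v ⟨a, ha⟩ ⟨b, hb⟩
    apply le_antisymm
    · rw [Submodule.span_singleton_le_iff_mem, Submodule.mem_span_singleton]
      exact ⟨b, hb.symm⟩
    · rw [Submodule.span_singleton_le_iff_mem, Submodule.mem_span_singleton]
      exact ⟨a, ha.symm⟩
  by_cases hx1 : x.1 = 0
  · -- L vertical
    have hx2 : x.2 ≠ 0 := fun h => hx0 (Prod.ext hx1 h)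
    have hvertφ : ∃ l : ℂ, heisU p (0, 1) φ = l • φ := by
      refine hφ (0, 1) ?_
      have : ((x.2)⁻¹ • x : ZMod p × ZMod p) = (0, 1) := by
        ext
        · simp [hx1]
        · simp [Prod.smul_snd, inv_mul_cancel₀ hx2]
      rw [← this]; exact hmemL _
    by_cases hy1 : y.1 = 0
    · -- M vertical too: contradiction
      exfalso
      apply hLM
      rw [hLx, hMy]
      have hy2 : y.2 ≠ 0 := fun h => hy0 (Prod.ext hy1 h)
      refine span_eq ⟨y.2 * x.2⁻¹, ?_⟩ ⟨x.2 * y.2⁻¹, ?_⟩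
      · ext
        · simp [hx1, hy1]
        · simp [Prod.smul_snd, mul_assoc, inv_mul_cancel₀ hx2]
      · ext
        · simp [hx1, hy1]
        · simp [Prod.smul_snd, mul_assoc, inv_mul_cancel₀ hy2]
    · -- M has slope d
      set d : ZMod p := y.2 * y.1⁻¹ with hd
      have hslopeψ : ∀ a : ZMod p, ∃ l : ℂ, heisU p (a, d * a) ψ = l • ψ := by
        intro a
        refine hψ (a, d * a) ?_
        have : ((a * y.1⁻¹) • y : ZMod p × ZMod p) = (a, d * a) := by
          ext
          · simp [Prod.smul_fst, mul_assoc, inv_mul_cancel₀ hy1]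
          · simp only [Prod.smul_snd, smul_eq_mul, hd]
            field_simp
        rw [← this]; exact hmemM _
      exact mixed_case φ ψ hφnorm hψnorm hvertφ d hslopeψ
  · -- L has slope c
    set c : ZMod p := x.2 * x.1⁻¹ with hc
    have hslopeφ : ∀ a : ZMod p, ∃ l : ℂ, heisU p (a, c * a) φ = l • φ := by
      intro a
      refine hφ (a, c * a) ?_
      have : ((a * x.1⁻¹) • x : ZMod p × ZMod p) = (a, c * a) := by
        ext
        · simp [Prod.smul_fst, mul_assoc, inv_mul_cancel₀ hx1]
        · simp only [Prod.smul_snd, smul_eq_mul, hc]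
          field_simp
      rw [← this]; exact hmemL _
    by_cases hy1 : y.1 = 0
    · -- M vertical: use conjugate symmetry
      have hy2 : y.2 ≠ 0 := fun h => hy0 (Prod.ext hy1 h)
      have hvertψ : ∃ l : ℂ, heisU p (0, 1) ψ = l • ψ := by
        refine hψ (0, 1) ?_
        have : ((y.2)⁻¹ • y : ZMod p × ZMod p) = (0, 1) := by
          ext
          · simp [hy1]
          · simp [Prod.smul_snd, inv_mul_cancel₀ hy2]
        rw [← this]; exact hmemM _
      have hconj : ‖∑ t, φ t * (starRingEnd ℂ) (ψ t)‖
          = ‖∑ t, ψ t * (starRingEnd ℂ) (φ t)‖ := by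
        rw [← Complex.norm_conj, map_sum]
        congr 1
        exact Finset.sum_congr rfl fun t _ => by
          rw [map_mul, Complex.conj_conj]; ring
      rw [hconj]
      exact mixed_case ψ φ hψnorm hφnorm hvertψ c hslopeφ
    · -- both slopes
      set d : ZMod p := y.2 * y.1⁻¹ with hd
      have hslopeψ : ∀ a : ZMod p, ∃ l : ℂ, heisU p (a, d * a) ψ = l • ψ := by
        intro a
        refine hψ (a, d * a) ?_
        have : ((a * y.1⁻¹) • y : ZMod p × ZMod p) = (a, d * a) := by
          ext
          · simp [Prod.smul_fst, mul_assoc, inv_mul_cancel₀ hy1]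
          · simp only [Prod.smul_snd, smul_eq_mul, hd]
            field_simp
        rw [← this]; exact hmemM _
      have hcd : c ≠ d := by
        intro heq
        apply hLM
        rw [hLx, hMy]
        refine span_eq ⟨y.1 * x.1⁻¹, ?_⟩ ⟨x.1 * y.1⁻¹, ?_⟩
        · have h2 : y.2 = d * y.1 := by rw [hd]; field_simp
          have h2' : x.2 = c * x.1 := by rw [hc]; field_simp
          ext
          · simp [Prod.smul_fst, mul_assoc, inv_mul_cancel₀ hx1]
          · simp only [Prod.smul_snd, smul_eq_mul]
            rw [h2, h2', ← heq]
            field_simp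
        · have h2 : y.2 = d * y.1 := by rw [hd]; field_simp
          have h2' : x.2 = c * x.1 := by rw [hc]; field_simp
          ext
          · simp [Prod.smul_fst, mul_assoc, inv_mul_cancel₀ hy1]
          · simp only [Prod.smul_snd, smul_eq_mul]
            rw [h2, h2', heq]
            field_simp
      exact slope_slope c d hcd φ ψ hφnorm hψnorm hslopeφ hslopeψ
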